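/- Let m = 60000. There exists L* such that for every integer L₀ ≥ L*, with L₁ = L₀^{10}, there exists M* (depending on L₀) such that for every multiple M of 4 with M ≥ M* the following holds. Let x₁,…,x_n ∈ {1,…,M} be any fixed sequence with n ≤ (100m+1)·L₁. Let (Y_t)_{t≥1} be i.i.d. uniform on {1,…,M} and σ = min{t ≥ L₁ : Y_t ≡ 3 (mod 4) and Y_{t+1} ≡ 2 (mod 4)}. Then the probability that there exists an open oriented path from (1,1) to (n,σ) — where a site (i,j) with 1 ≤ i ≤ n, 1 ≤ j ≤ σ is open if x_i ≠ Y_j — is at least 3/4 + 2^{−4}. -/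

import Mathlib

open MeasureTheory ProbabilityTheory
open scoped ENNReal

private lemma frac_le' (a b c d : ℕ) (hb : 0 < b) (hd : 0 < d) (h : a * d ≤ c * b) :
    (a : ℝ≥0∞) / b ≤ (c : ℝ≥0∞) / d := by
  rw [ENNReal.div_le_iff (by exact_mod_cast hb.ne') (by simp),
    div_eq_mul_inv, mul_right_comm, ← div_eq_mul_inv,
    ENNReal.le_div_iff_mul_le (by exact_mod_cast Or.inl hd.ne') (by simp)]
  exact_mod_cast h

private lemma inv_mul_cancel_nat (a c : ℕ) (ha : 0 < a) (hc : 0 < c) :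
    (a : ℝ≥0∞) * ((c : ℝ≥0∞) * (a : ℝ≥0∞))⁻¹ = ((c : ℝ≥0∞))⁻¹ := by
  have ha0 : (a : ℝ≥0∞) ≠ 0 := by exact_mod_cast ha.ne'
  have hat : (a : ℝ≥0∞) ≠ ∞ := by simp
  have hc0 : (c : ℝ≥0∞) ≠ 0 := by exact_mod_cast hc.ne'
  rw [ENNReal.mul_inv (Or.inl hc0) (Or.inr ha0),
    mul_comm ((c : ℝ≥0∞))⁻¹ ((a : ℝ≥0∞))⁻¹, ← mul_assoc,
    ENNReal.mul_inv_cancel ha0 hat, one_mul]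

/-- Probability that a uniform random variable on `{1,…,M}` (with `4 ∣ M`) lies in a fixed
residue class `c` mod 4 (with `1 ≤ c < 4`) is at least `1/4`. -/
private lemma resid_ge {Ω : Type} [MeasurableSpace Ω] (μ : Measure Ω)
    (f : Ω → ℕ) (hf : Measurable f) (M c : ℕ) (hc1 : 1 ≤ c) (hc : c < 4)
    (hM4 : 4 ∣ M) (hM : 4 ≤ M)
    (hunif : ∀ k, k ∈ Finset.Icc 1 M → μ {ω | f ω = k} = (M : ℝ≥0∞)⁻¹) :
    (4 : ℝ≥0∞)⁻¹ ≤ μ (f ⁻¹' {k | k % 4 = c}) := by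
  classical
  have hmem : ∀ j ∈ Finset.range (M / 4), 4 * j + c ∈ Finset.Icc 1 M := by
    intro j hj
    simp only [Finset.mem_range] at hj
    simp only [Finset.mem_Icc]
    omega
  have hsub : (⋃ j ∈ Finset.range (M / 4), {ω | f ω = 4 * j + c}) ⊆ f ⁻¹' {k | k % 4 = c} := by
    intro ω hω
    simp only [Set.mem_iUnion, Set.mem_setOf_eq, Finset.mem_range] at hω
    simp only [Set.mem_preimage, Set.mem_setOf_eq]
    obtain ⟨j, _, h⟩ := hω
    omega
  have hdisj : (↑(Finset.range (M / 4)) : Set ℕ).PairwiseDisjoint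
      (fun j => {ω | f ω = 4 * j + c}) := by
    intro i _ j _ hij
    simp only [Function.onFun]
    rw [Set.disjoint_left]
    intro ω h1 h2
    simp only [Set.mem_setOf_eq] at h1 h2
    omega
  have hmeaseach : ∀ j ∈ Finset.range (M / 4), MeasurableSet {ω | f ω = 4 * j + c} :=
    fun j _ => hf (measurableSet_singleton _)
  have hquart : ((M / 4 : ℕ) : ℝ≥0∞) * (M : ℝ≥0∞)⁻¹ = (4 : ℝ≥0∞)⁻¹ := by
    obtain ⟨q, hq⟩ := hM4
    have hq1 : 1 ≤ q := by omega
    subst hq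
    rw [Nat.mul_div_cancel_left q (by norm_num)]
    have := inv_mul_cancel_nat q 4 hq1 (by norm_num)
    push_cast at this ⊢
    exact this
  calc (4 : ℝ≥0∞)⁻¹ = ((M / 4 : ℕ) : ℝ≥0∞) * (M : ℝ≥0∞)⁻¹ := hquart.symm
    _ = ∑ j ∈ Finset.range (M / 4), μ {ω | f ω = 4 * j + c} := by
        rw [Finset.sum_congr rfl (fun j hj => hunif _ (hmem j hj)), Finset.sum_const,
          Finset.card_range, nsmul_eq_mul]
    _ = μ (⋃ j ∈ Finset.range (M / 4), {ω | f ω = 4 * j + c}) :=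
        (measure_biUnion_finset hdisj hmeaseach).symm
    _ ≤ μ (f ⁻¹' {k | k % 4 = c}) := measure_mono hsub

/-- **Corner-to-corner connection against a typical word (base level).** With
`m = 60000`: for all sufficiently large `L₀`, with `L₁ = L₀^10`, there is `M*`
(depending on `L₀`) such that for every multiple `M ≥ M*` of `4` the following
holds. For any fixed word `x₁, …, x_n` in `{1, …, M}` with `1 ≤ n ≤ (100m+1)L₁`,
and `(Y_t)` i.i.d. uniform on `{1, …, M}` with
`σ = min {t ≥ L₁ : Y_t ≡ 3 [MOD 4], Y_{t+1} ≡ 2 [MOD 4]}`, the probability that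
there is an open oriented path from `(1,1)` to `(n, σ)` — site `(i,j)` being open
iff `x i ≠ Y j` — is at least `3/4 + 2⁻⁴`. -/
theorem base_corner_to_corner_lower_bound (m : ℕ) (hm : m = 60000) :
    ∃ Lstar : ℕ, ∀ L₀ : ℕ, Lstar ≤ L₀ →
    ∃ Mstar : ℕ, ∀ M : ℕ, 4 ∣ M → Mstar ≤ M →
    ∀ (Ω : Type) (_ : MeasurableSpace Ω) (μ : Measure Ω), IsProbabilityMeasure μ →
    ∀ (Y : ℕ → Ω → ℕ),
      (∀ j, Measurable (Y j)) →
      (∀ j ω, Y j ω ∈ Finset.Icc 1 M) →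
      (∀ j k, k ∈ Finset.Icc 1 M → μ {ω | Y j ω = k} = (M : ℝ≥0∞)⁻¹) →
      iIndepFun Y μ →
      ∀ (n : ℕ) (x : ℕ → ℕ), 1 ≤ n → n ≤ (100 * m + 1) * L₀ ^ 10 →
      (∀ i, 1 ≤ i → i ≤ n → x i ∈ Finset.Icc 1 M) →
      (3 : ℝ≥0∞) / 4 + ((2 : ℝ≥0∞) ^ (4 : ℕ))⁻¹ ≤
        μ {ω | ∃ (ℓ : ℕ) (p : ℕ → ℕ × ℕ), p 0 = (1, 1) ∧
            p ℓ = (n, sInf {t | L₀ ^ 10 ≤ t ∧ Y t ω % 4 = 3 ∧ Y (t + 1) ω % 4 = 2}) ∧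
            (∀ t, t < ℓ → p (t + 1) = p t + (1, 0) ∨ p (t + 1) = p t + (0, 1)) ∧
            (∀ t, t ≤ ℓ → x (p t).1 ≠ Y (p t).2 ω)} := by
  classical
  refine ⟨2, fun L₀ hL₀ => ?_⟩
  set L₁ := L₀ ^ 10 with hL₁def
  have hL₁ : 2 ≤ L₁ := le_trans (by norm_num) (Nat.pow_le_pow_left hL₀ 10)
  set N := (100 * m + 1) * L₁ with hNdef
  set T := L₁ + 128 with hTdef
  have hN1 : 1 ≤ N := Nat.one_le_iff_ne_zero.mpr (by positivity)
  have hT1 : 1 ≤ T := by omega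
  refine ⟨32 * (T * N), fun M hM4 hMge Ω mΩ μ hμ Y hYm hYrange hYunif hYindep n x hn1 hnN hx => ?_⟩
  have hM4' : 4 ≤ M := by
    have h32 : 32 * (1 * 1) ≤ 32 * (T * N) := Nat.mul_le_mul_left _ (Nat.mul_le_mul hT1 hN1)
    omega
  -- the target event
  set E : Set Ω := {ω | ∃ (ℓ : ℕ) (p : ℕ → ℕ × ℕ), p 0 = (1, 1) ∧
      p ℓ = (n, sInf {t | L₁ ≤ t ∧ Y t ω % 4 = 3 ∧ Y (t + 1) ω % 4 = 2}) ∧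
      (∀ t, t < ℓ → p (t + 1) = p t + (1, 0) ∨ p (t + 1) = p t + (0, 1)) ∧
      (∀ t, t ≤ ℓ → x (p t).1 ≠ Y (p t).2 ω)} with hEdef
  -- every subset of ℕ is measurable
  have hsetk : ∀ s : Set ℕ, MeasurableSet s := fun s => s.to_countable.measurableSet
  -- pattern events
  set A : ℕ → Set Ω := fun i =>
    (Y (L₁ + 2 * i) ⁻¹' {k | k % 4 = 3}) ∩ (Y (L₁ + 2 * i + 1) ⁻¹' {k | k % 4 = 2}) with hAdef
  set D : ℕ → Set Ω := fun r => ⋂ i ∈ Finset.range r, (A i)ᶜ with hDdef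
  set S : Finset ℕ := (Finset.Icc 1 n).image x with hSdef
  set V : Set Ω := ⋂ j ∈ Finset.Icc 1 T, Y j ⁻¹' {k | k ∉ S} with hVdef
  set G : Set Ω := (⋃ i ∈ Finset.range 64, A i) ∩ V with hGdef
  have hA : ∀ i, MeasurableSet (A i) :=
    fun i => ((hYm _) (hsetk _)).inter ((hYm _) (hsetk _))
  have hV : MeasurableSet V :=
    Finset.measurableSet_biInter _ (fun j _ => (hYm j) (hsetk _))
  have hG : MeasurableSet G :=
    (Finset.measurableSet_biUnion _ (fun i _ => hA i)).inter hV
  -- probability that a fixed pair fails is at most 15/16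
  have hpair : ∀ i, μ ((A i)ᶜ) ≤ 15 / 16 := by
    intro i
    have hind : IndepFun (Y (L₁ + 2 * i)) (Y (L₁ + 2 * i + 1)) μ :=
      hYindep.indepFun (by omega)
    have hmul : μ (A i) = μ (Y (L₁ + 2 * i) ⁻¹' {k | k % 4 = 3}) *
        μ (Y (L₁ + 2 * i + 1) ⁻¹' {k | k % 4 = 2}) :=
      hind.measure_inter_preimage_eq_mul _ _ (hsetk _) (hsetk _)
    have h3 : (4 : ℝ≥0∞)⁻¹ ≤ μ (Y (L₁ + 2 * i) ⁻¹' {k | k % 4 = 3}) :=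
      resid_ge μ _ (hYm _) M 3 (by norm_num) (by norm_num) hM4 hM4' (hYunif _)
    have h2 : (4 : ℝ≥0∞)⁻¹ ≤ μ (Y (L₁ + 2 * i + 1) ⁻¹' {k | k % 4 = 2}) :=
      resid_ge μ _ (hYm _) M 2 (by norm_num) (by norm_num) hM4 hM4' (hYunif _)
    have h116 : (16 : ℝ≥0∞)⁻¹ ≤ μ (A i) := by
      rw [hmul, show (16 : ℝ≥0∞) = 4 * 4 by norm_num,
        ENNReal.mul_inv (by norm_num) (by norm_num)]
      exact mul_le_mul' h3 h2
    calc μ ((A i)ᶜ) = 1 - μ (A i) := prob_compl_eq_one_sub (hA i)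
      _ ≤ 1 - (16 : ℝ≥0∞)⁻¹ := tsub_le_tsub_left h116 1
      _ ≤ 15 / 16 := by
          rw [tsub_le_iff_right, ← one_div]
          calc (1 : ℝ≥0∞) = 16 / 16 := by rw [ENNReal.div_self] <;> norm_num
            _ ≤ _ := by rw [ENNReal.div_add_div_same]; norm_num
  -- independence-based induction: probability that the first r pairs all fail
  have hD : ∀ r, μ (D r) ≤ (15 / 16 : ℝ≥0∞) ^ r := by
    intro r
    induction r with
    | zero => simp [hDdef]
    | succ r ih =>
      have hsplit : D (r + 1) = (A r)ᶜ ∩ D r := by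
        simp only [hDdef, Finset.range_add_one, Finset.set_biInter_insert]
      set 𝔪 : ℕ → MeasurableSpace Ω :=
        fun j => MeasurableSpace.comap (Y j) (inferInstance : MeasurableSpace ℕ) with h𝔪def
      have h_le : ∀ j, 𝔪 j ≤ mΩ := fun j => (hYm j).comap_le
      have hdisj : Disjoint ({L₁ + 2 * r, L₁ + 2 * r + 1} : Set ℕ) {j | j < L₁ + 2 * r} := by
        rw [Set.disjoint_left]
        intro a ha ha'
        simp only [Set.mem_insert_iff, Set.mem_singleton_iff] at ha
        simp only [Set.mem_setOf_eq] at ha'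
        omega
      have hindep : Indep (⨆ j ∈ ({L₁ + 2 * r, L₁ + 2 * r + 1} : Set ℕ), 𝔪 j)
          (⨆ j ∈ {j | j < L₁ + 2 * r}, 𝔪 j) μ :=
        indep_iSup_of_disjoint h_le hYindep.iIndep hdisj
      have hmem𝔪 : ∀ (t : ℕ) (s : Set ℕ), MeasurableSet[𝔪 t] (Y t ⁻¹' s) :=
        fun t s => ⟨s, hsetk s, rfl⟩
      have hlift : ∀ (U : Set ℕ) (t : ℕ), t ∈ U → ∀ s : Set Ω,
          MeasurableSet[𝔪 t] s → MeasurableSet[⨆ j ∈ U, 𝔪 j] s := by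
        intro U t ht s hs
        exact (le_iSup₂ (f := fun (j : ℕ) (_ : j ∈ U) => 𝔪 j) t ht) s hs
      have hAm : MeasurableSet[⨆ j ∈ ({L₁ + 2 * r, L₁ + 2 * r + 1} : Set ℕ), 𝔪 j] ((A r)ᶜ) := by
        refine MeasurableSet.compl (MeasurableSet.inter ?_ ?_)
        · exact hlift _ _ (by simp) _ (hmem𝔪 _ _)
        · exact hlift _ _ (by simp) _ (hmem𝔪 _ _)
      have hDm : MeasurableSet[⨆ j ∈ {j | j < L₁ + 2 * r}, 𝔪 j] (D r) := by
        refine Finset.measurableSet_biInter _ (fun i hi => ?_)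
        simp only [Finset.mem_range] at hi
        refine MeasurableSet.compl (MeasurableSet.inter ?_ ?_)
        · exact hlift _ (L₁ + 2 * i) (by simp only [Set.mem_setOf_eq]; omega) _ (hmem𝔪 _ _)
        · exact hlift _ (L₁ + 2 * i + 1) (by simp only [Set.mem_setOf_eq]; omega) _ (hmem𝔪 _ _)
      have hprod : μ ((A r)ᶜ ∩ D r) = μ ((A r)ᶜ) * μ (D r) :=
        (Indep_iff _ _ _).mp hindep _ _ hAm hDm
      calc μ (D (r + 1)) = μ ((A r)ᶜ) * μ (D r) := by rw [hsplit, hprod]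
        _ ≤ (15 / 16) * (15 / 16 : ℝ≥0∞) ^ r := mul_le_mul' (hpair r) ih
        _ = (15 / 16 : ℝ≥0∞) ^ (r + 1) := (pow_succ' _ _).symm
  -- union bound for the avoidance event
  have hVc : μ (Vᶜ) ≤ ((T * N : ℕ) : ℝ≥0∞) * (M : ℝ≥0∞)⁻¹ := by
    have hVc_eq : Vᶜ = ⋃ j ∈ Finset.Icc 1 T, Y j ⁻¹' {k | k ∈ S} := by
      rw [hVdef, Set.compl_iInter₂]
      refine Set.iUnion₂_congr (fun j _ => ?_)
      ext ω
      simp [Set.mem_preimage, Set.mem_setOf_eq]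
    have hone : ∀ j, μ (Y j ⁻¹' {k | k ∈ S}) ≤ (N : ℝ≥0∞) * (M : ℝ≥0∞)⁻¹ := by
      intro j
      have hsub : Y j ⁻¹' {k | k ∈ S} ⊆ ⋃ k ∈ S, {ω | Y j ω = k} := by
        intro ω hω
        simp only [Set.mem_preimage, Set.mem_setOf_eq] at hω
        exact Set.mem_biUnion hω rfl
      calc μ (Y j ⁻¹' {k | k ∈ S}) ≤ μ (⋃ k ∈ S, {ω | Y j ω = k}) := measure_mono hsub
        _ ≤ ∑ k ∈ S, μ {ω | Y j ω = k} := measure_biUnion_finset_le _ _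
        _ = ∑ k ∈ S, (M : ℝ≥0∞)⁻¹ := by
            refine Finset.sum_congr rfl (fun k hk => ?_)
            rw [hSdef] at hk
            obtain ⟨i, hi, hik⟩ := Finset.mem_image.mp hk
            simp only [Finset.mem_Icc] at hi
            exact hik ▸ hYunif j _ (hx i hi.1 hi.2)
        _ = (S.card : ℝ≥0∞) * (M : ℝ≥0∞)⁻¹ := by
            rw [Finset.sum_const, nsmul_eq_mul]
        _ ≤ (N : ℝ≥0∞) * (M : ℝ≥0∞)⁻¹ := by
            refine mul_le_mul_left ?_ _
            refine Nat.cast_le.mpr (le_trans Finset.card_image_le ?_)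
            rw [Nat.card_Icc]
            omega
    calc μ (Vᶜ) = μ (⋃ j ∈ Finset.Icc 1 T, Y j ⁻¹' {k | k ∈ S}) := by rw [hVc_eq]
      _ ≤ ∑ j ∈ Finset.Icc 1 T, μ (Y j ⁻¹' {k | k ∈ S}) := measure_biUnion_finset_le _ _
      _ ≤ ∑ _j ∈ Finset.Icc 1 T, (N : ℝ≥0∞) * (M : ℝ≥0∞)⁻¹ :=
          Finset.sum_le_sum (fun j _ => hone j)
      _ = ((T : ℝ≥0∞)) * ((N : ℝ≥0∞) * (M : ℝ≥0∞)⁻¹) := by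
          rw [Finset.sum_const, nsmul_eq_mul, Nat.card_Icc]
          norm_num
      _ = ((T * N : ℕ) : ℝ≥0∞) * (M : ℝ≥0∞)⁻¹ := by rw [Nat.cast_mul T N, mul_assoc ((T:ℝ≥0∞)) ((N:ℝ≥0∞))]
  have hVc32 : μ (Vᶜ) ≤ (32 : ℝ≥0∞)⁻¹ := by
    have hMinv : (M : ℝ≥0∞)⁻¹ ≤ ((32 * (T * N) : ℕ) : ℝ≥0∞)⁻¹ :=
      ENNReal.inv_le_inv' (Nat.cast_le.mpr hMge)
    have hTN : 0 < T * N := by positivity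
    have hkey := inv_mul_cancel_nat (T * N) 32 hTN (by norm_num)
    calc μ (Vᶜ) ≤ ((T * N : ℕ) : ℝ≥0∞) * (M : ℝ≥0∞)⁻¹ := hVc
      _ ≤ ((T * N : ℕ) : ℝ≥0∞) * ((32 * (T * N) : ℕ) : ℝ≥0∞)⁻¹ := mul_le_mul_right hMinv _
      _ = (32 : ℝ≥0∞)⁻¹ := by
          rw [Nat.cast_mul 32 (T * N), hkey]
          norm_num
  -- total failure probability
  have hGc : μ (Gᶜ) ≤ 3 / 16 := by
    have hGc_eq : Gᶜ = D 64 ∪ Vᶜ := by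
      rw [hGdef, Set.compl_inter]
      congr 1
      simp only [hDdef]
      exact Set.compl_iUnion₂ _
    have h64 : ((15 : ℝ≥0∞) / 16) ^ 64 ≤ 5 / 32 := by
      calc ((15 : ℝ≥0∞) / 16) ^ 64 = ((15 : ℝ≥0∞) ^ 64) / (16 ^ 64) := by
            rw [div_eq_mul_inv, mul_pow, ← ENNReal.inv_pow, ← div_eq_mul_inv]
        _ ≤ 5 / 32 := by
            have h15 : (15 : ℝ≥0∞) ^ 64 = ((15 ^ 64 : ℕ) : ℝ≥0∞) := by push_cast; ring
            have h16 : (16 : ℝ≥0∞) ^ 64 = ((16 ^ 64 : ℕ) : ℝ≥0∞) := by push_cast; ring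
            have h5 : (5 : ℝ≥0∞) = ((5 : ℕ) : ℝ≥0∞) := by norm_num
            have h32 : (32 : ℝ≥0∞) = ((32 : ℕ) : ℝ≥0∞) := by norm_num
            rw [h15, h16, h5, h32]
            exact frac_le' _ _ _ _ (by positivity) (by norm_num) (by norm_num)
    calc μ (Gᶜ) = μ (D 64 ∪ Vᶜ) := by rw [hGc_eq]
      _ ≤ μ (D 64) + μ (Vᶜ) := measure_union_le _ _
      _ ≤ (15 / 16 : ℝ≥0∞) ^ 64 + (32 : ℝ≥0∞)⁻¹ := add_le_add (hD 64) hVc32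
      _ ≤ 5 / 32 + 1 / 32 := add_le_add h64 (by rw [one_div])
      _ = 6 / 32 := by rw [ENNReal.div_add_div_same]; norm_num
      _ ≤ 3 / 16 := frac_le' 6 32 3 16 (by norm_num) (by norm_num) (by norm_num)
  -- the good event implies the existence of an open path
  have hGE : G ⊆ E := by
    rintro ω ⟨hpat, hav⟩
    simp only [Set.mem_iUnion, Finset.mem_range, exists_prop] at hpat
    obtain ⟨i, hi64, hAi⟩ := hpat
    obtain ⟨h3, h2⟩ := hAi
    simp only [Set.mem_preimage, Set.mem_setOf_eq] at h3 h2
    have hav' : ∀ j, 1 ≤ j → j ≤ T → Y j ω ∉ S := by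
      intro j hj1 hjT
      have := Set.mem_iInter₂.mp hav j (Finset.mem_Icc.mpr ⟨hj1, hjT⟩)
      simpa using this
    have hxS : ∀ i', 1 ≤ i' → i' ≤ n → x i' ∈ S :=
      fun i' h1 h2' => Finset.mem_image_of_mem x (Finset.mem_Icc.mpr ⟨h1, h2'⟩)
    rw [hEdef]
    simp only [Set.mem_setOf_eq]
    set Q : Set ℕ := {t | L₁ ≤ t ∧ Y t ω % 4 = 3 ∧ Y (t + 1) ω % 4 = 2} with hQdef
    have hQne : (L₁ + 2 * i) ∈ Q := ⟨by omega, h3, h2⟩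
    set σ : ℕ := sInf Q with hσdef
    have hσmem : σ ∈ Q := Nat.sInf_mem ⟨_, hQne⟩
    have hσge : L₁ ≤ σ := hσmem.1
    have hσle : σ ≤ L₁ + 2 * i := Nat.sInf_le hQne
    have hσT : σ ≤ T := by omega
    have hσ2 : 2 ≤ σ := by omega
    refine ⟨n + (σ - 2), fun t => if t < n then (t + 1, 1) else (n, t - n + 2), ?_, ?_, ?_, ?_⟩
    · show (if 0 < n then ((0:ℕ) + 1, (1:ℕ)) else (n, 0 - n + 2)) = (1, 1)
      rw [if_pos (show 0 < n by omega)]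
    · show (if n + (σ - 2) < n then (n + (σ - 2) + 1, (1:ℕ)) else (n, n + (σ - 2) - n + 2))
          = (n, σ)
      rw [if_neg (show ¬ n + (σ - 2) < n by omega), Prod.mk.injEq]
      exact ⟨rfl, by omega⟩
    · intro t ht
      show (if t + 1 < n then (t + 1 + 1, (1:ℕ)) else (n, t + 1 - n + 2)) =
            (if t < n then (t + 1, (1:ℕ)) else (n, t - n + 2)) + (1, 0) ∨
          (if t + 1 < n then (t + 1 + 1, (1:ℕ)) else (n, t + 1 - n + 2)) =
            (if t < n then (t + 1, (1:ℕ)) else (n, t - n + 2)) + (0, 1)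
      by_cases htn : t < n
      · by_cases ht1 : t + 1 < n
        · left
          rw [if_pos ht1, if_pos htn]
          rfl
        · right
          rw [if_neg ht1, if_pos htn, Prod.mk_add_mk, Prod.mk.injEq]
          omega
      · right
        rw [if_neg (show ¬ t + 1 < n by omega), if_neg htn, Prod.mk_add_mk, Prod.mk.injEq]
        omega
    · intro t ht
      by_cases htn : t < n
      · simp only [if_pos htn]
        show x (t + 1) ≠ Y 1 ω
        intro heq
        exact hav' 1 le_rfl hT1 (heq ▸ hxS (t + 1) (by omega) htn)
      · simp only [if_neg htn]
        show x n ≠ Y (t - n + 2) ω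
        intro heq
        exact hav' (t - n + 2) (by omega) (by omega) (heq ▸ hxS n hn1 le_rfl)
  -- conclude
  have harith : μ (Gᶜ) + ((3 : ℝ≥0∞) / 4 + ((2 : ℝ≥0∞) ^ (4 : ℕ))⁻¹) ≤ 1 := by
    have h24 : ((2 : ℝ≥0∞) ^ (4 : ℕ))⁻¹ = 1 / 16 := by norm_num [← one_div]
    have h34 : (3 : ℝ≥0∞) / 4 = 12 / 16 := by
      have hle1 := frac_le' 3 4 12 16 (by norm_num) (by norm_num) (by norm_num)
      have hle2 := frac_le' 12 16 3 4 (by norm_num) (by norm_num) (by norm_num)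
      push_cast at hle1 hle2
      exact le_antisymm hle1 hle2
    calc μ (Gᶜ) + ((3 : ℝ≥0∞) / 4 + ((2 : ℝ≥0∞) ^ (4 : ℕ))⁻¹)
        ≤ 3 / 16 + ((12 : ℝ≥0∞) / 16 + 1 / 16) := by
          rw [← h34, ← h24]; exact add_le_add_left hGc _
      _ = (3 + (12 + 1)) / 16 := by rw [ENNReal.div_add_div_same, ENNReal.div_add_div_same]
      _ = 16 / 16 := by norm_num
      _ = 1 := by rw [ENNReal.div_self] <;> norm_num
  calc (3 : ℝ≥0∞) / 4 + ((2 : ℝ≥0∞) ^ (4 : ℕ))⁻¹ ≤ 1 - μ (Gᶜ) :=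
        ENNReal.le_sub_of_add_le_left (measure_ne_top μ _) harith
    _ = μ G := by
        have h := prob_compl_eq_one_sub (μ := μ) hG.compl
        rw [compl_compl] at h
        exact h.symm
    _ ≤ μ E := measure_mono hGE
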